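/- Let c be a real number with 0 ≤ c < 1 and let n be a positive integer. Let G be the n×n real matrix with entries G_{ij} = c^{|i−j|}, and let H be the n×n real matrix with entries H_{ij} = δ_{i,j+1} + δ_{j,i+1} + c(δ_{i,1}δ_{j,1} + δ_{i,n}δ_{j,n}). Then G is invertible and G⁻¹ = ((1+c²)/(1−c²))·I − (c/(1−c²))·H; equivalently, G · ( ((1+c²)/(1−c²))·I − (c/(1−c²))·H ) = I. -/

import Mathlib

open Matrix BigOperators

/-- the inverse of the change point Gram matrix `G_{ij} = c^{|i-j|}` is
`((1+c²)/(1−c²))·I − (c/(1−c²))·H`. Indices of `Fin n` are 0-based, corresponding to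
the 1-based indices `{1,…,n}` of the informal statement. -/
theorem gram_inverse
    (c : ℝ) (hc0 : 0 ≤ c) (hc1 : c < 1) (n : ℕ) (hn : 0 < n)
    (G H : Matrix (Fin n) (Fin n) ℝ)
    (hGdef : ∀ i j, G i j = c ^ Nat.dist i.1 j.1)
    (hHdef : ∀ i j, H i j =
      (if i.1 = j.1 + 1 then 1 else 0) + (if j.1 = i.1 + 1 then 1 else 0)
        + c * ((if i.1 = 0 ∧ j.1 = 0 then 1 else 0)
          + (if i.1 = n - 1 ∧ j.1 = n - 1 then 1 else 0))) :
    IsUnit G ∧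
    G⁻¹ = ((1 + c ^ 2) / (1 - c ^ 2)) • (1 : Matrix (Fin n) (Fin n) ℝ)
            - (c / (1 - c ^ 2)) • H ∧
    G * (((1 + c ^ 2) / (1 - c ^ 2)) • (1 : Matrix (Fin n) (Fin n) ℝ)
            - (c / (1 - c ^ 2)) • H) = 1 := by
  have hc2 : (1 : ℝ) - c ^ 2 ≠ 0 := by nlinarith
  -- main computation
  have hGA : G * ((1 + c ^ 2) • (1 : Matrix (Fin n) (Fin n) ℝ) - c • H)
      = (1 - c ^ 2) • (1 : Matrix (Fin n) (Fin n) ℝ) := by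
    ext i j
    rw [Matrix.mul_apply]
    set a := i.1 with ha
    set b := j.1 with hb
    have hbn : b < n := j.2
    have han : a < n := i.2
    -- the four sub-sums of ∑ G i k * H k j
    have S1 : ∑ k : Fin n, G i k * (if k.1 = b + 1 then (1:ℝ) else 0)
        = if b + 1 < n then c ^ Nat.dist a (b + 1) else 0 := by
      split_ifs with h
      · rw [Finset.sum_eq_single (⟨b + 1, h⟩ : Fin n)]
        · simp [hGdef, ha]
        · intro k _ hk
          rw [if_neg (fun hk1 => hk (Fin.ext hk1)), mul_zero]
        · simp
      · apply Finset.sum_eq_zero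
        intro k _
        have hkn := k.2
        rw [if_neg (by omega), mul_zero]
    have S2 : ∑ k : Fin n, G i k * (if b = k.1 + 1 then (1:ℝ) else 0)
        = if 0 < b then c ^ Nat.dist a (b - 1) else 0 := by
      split_ifs with h
      · rw [Finset.sum_eq_single (⟨b - 1, lt_of_le_of_lt (Nat.pred_le _) hbn⟩ : Fin n)]
        · have hb1 : b - 1 + 1 = b := by omega
          simp [hGdef, hb1, ha]
        · intro k _ hk
          rw [if_neg, mul_zero]
          intro hk1
          exact hk (Fin.ext (show k.1 = b - 1 by omega))
        · simp
      · apply Finset.sum_eq_zero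
        intro k _
        rw [if_neg (by omega), mul_zero]
    have S3 : ∑ k : Fin n, c * (G i k * (if k.1 = 0 ∧ b = 0 then (1:ℝ) else 0))
        = c * (if b = 0 then c ^ a else 0) := by
      rw [← Finset.mul_sum]
      congr 1
      split_ifs with h
      · rw [Finset.sum_eq_single (⟨0, hn⟩ : Fin n)]
        · rw [if_pos ⟨rfl, h⟩, mul_one, hGdef]
          simp [Nat.dist, ha]
        · intro k _ hk
          rw [if_neg (fun hk1 => hk (Fin.ext hk1.1)), mul_zero]
        · simp
      · apply Finset.sum_eq_zero
        intro k _
        rw [if_neg (fun hk1 => h hk1.2), mul_zero]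
    have S4 : ∑ k : Fin n, c * (G i k * (if k.1 = n - 1 ∧ b = n - 1 then (1:ℝ) else 0))
        = c * (if b = n - 1 then c ^ (n - 1 - a) else 0) := by
      rw [← Finset.mul_sum]
      congr 1
      split_ifs with h
      · rw [Finset.sum_eq_single (⟨n - 1, by omega⟩ : Fin n)]
        · rw [if_pos ⟨rfl, h⟩, mul_one, hGdef]
          congr 1
          simp only [Nat.dist]
          omega
        · intro k _ hk
          rw [if_neg (fun hk1 => hk (Fin.ext hk1.1)), mul_zero]
        · simp
      · apply Finset.sum_eq_zero
        intro k _
        rw [if_neg (fun hk1 => h hk1.2), mul_zero]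
    have hT : ∑ k : Fin n, G i k * H k j
        = (if b + 1 < n then c ^ Nat.dist a (b + 1) else 0)
          + (if 0 < b then c ^ Nat.dist a (b - 1) else 0)
          + c * ((if b = 0 then c ^ a else 0) + (if b = n - 1 then c ^ (n - 1 - a) else 0)) := by
      have step : ∑ k : Fin n, G i k * H k j
          = ((∑ k : Fin n, G i k * (if k.1 = b + 1 then (1:ℝ) else 0))
              + (∑ k : Fin n, G i k * (if b = k.1 + 1 then (1:ℝ) else 0)))
            + ((∑ k : Fin n, c * (G i k * (if k.1 = 0 ∧ b = 0 then (1:ℝ) else 0)))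
              + (∑ k : Fin n, c * (G i k * (if k.1 = n - 1 ∧ b = n - 1 then (1:ℝ) else 0)))) := by
        rw [← Finset.sum_add_distrib, ← Finset.sum_add_distrib, ← Finset.sum_add_distrib]
        refine Finset.sum_congr rfl fun k _ => ?_
        rw [hHdef]
        ring
      rw [step, S1, S2, S3, S4]
      ring
    have hG0 : ∑ k : Fin n, G i k * (if k = j then (1:ℝ) else 0) = c ^ Nat.dist a b := by
      rw [Finset.sum_eq_single j]
      · simp [hGdef, ha, hb]
      · intro k _ hk; rw [if_neg hk, mul_zero]
      · simp
    have expand : ∀ k : Fin n,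
        G i k * ((1 + c ^ 2) • (1 : Matrix (Fin n) (Fin n) ℝ) - c • H) k j
        = (1 + c ^ 2) * (G i k * (if k = j then (1:ℝ) else 0)) - c * (G i k * H k j) := by
      intro k
      simp only [Matrix.sub_apply, Matrix.smul_apply, Matrix.one_apply, smul_eq_mul]
      ring
    rw [Finset.sum_congr rfl (fun k _ => expand k), Finset.sum_sub_distrib,
      ← Finset.mul_sum, ← Finset.mul_sum, hG0, hT]
    simp only [Matrix.smul_apply, Matrix.one_apply, smul_eq_mul]
    -- now a pure real computation
    rcases lt_trichotomy a b with hab | hab | hab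
    · -- a < b
      have hne : i ≠ j := by
        intro hh
        rw [ha, hb, hh] at hab
        exact lt_irrefl _ hab
      rw [if_neg hne]
      obtain ⟨e, he⟩ : ∃ e, b = a + 1 + e := ⟨b - a - 1, by omega⟩
      have d1 : Nat.dist a b = e + 1 := by simp only [Nat.dist]; omega
      have d2 : Nat.dist a (b + 1) = e + 2 := by simp only [Nat.dist]; omega
      have d3 : Nat.dist a (b - 1) = e := by simp only [Nat.dist]; omega
      have p1 : 0 < b := by omega
      have p2 : ¬ b = 0 := by omega
      rw [d1, d2, d3, if_pos p1, if_neg p2]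
      by_cases hbn1 : b + 1 < n
      · have p3 : ¬ b = n - 1 := by omega
        rw [if_pos hbn1, if_neg p3]
        ring
      · have p3 : b = n - 1 := by omega
        have hnb : n - 1 - a = e + 1 := by omega
        rw [if_neg hbn1, if_pos p3, hnb]
        ring
    · -- a = b
      rw [if_pos (Fin.ext hab), ← hab, Nat.dist_self]
      by_cases h0 : 0 < a
      · have d3 : Nat.dist a (a - 1) = 1 := by simp only [Nat.dist]; omega
        have p2 : ¬ a = 0 := by omega
        rw [if_pos h0, d3, if_neg p2]
        by_cases hbn1 : a + 1 < n
        · have d2 : Nat.dist a (a + 1) = 1 := by simp only [Nat.dist]; omega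
          have p3 : ¬ a = n - 1 := by omega
          rw [if_pos hbn1, d2, if_neg p3]
          ring
        · have p3 : a = n - 1 := by omega
          have hnb : n - 1 - a = 0 := by omega
          rw [if_neg hbn1, if_pos p3, hnb]
          ring
      · have ha0 : a = 0 := by omega
        rw [if_neg h0, if_pos ha0]
        by_cases hbn1 : a + 1 < n
        · have d2 : Nat.dist a (a + 1) = 1 := by simp only [Nat.dist]; omega
          have p3 : ¬ a = n - 1 := by omega
          rw [if_pos hbn1, d2, if_neg p3, ha0]
          ring
        · have p3 : a = n - 1 := by omega
          have h1 : n - 1 - a = 0 := by omega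
          rw [if_neg hbn1, if_pos p3, h1, ha0]
          ring
    · -- a > b
      have hne : i ≠ j := by
        intro hh
        rw [ha, hb, hh] at hab
        exact lt_irrefl _ hab
      rw [if_neg hne]
      obtain ⟨e, he⟩ : ∃ e, a = b + 1 + e := ⟨a - b - 1, by omega⟩
      have d1 : Nat.dist a b = e + 1 := by simp only [Nat.dist]; omega
      have d2 : Nat.dist a (b + 1) = e := by simp only [Nat.dist]; omega
      have p1 : b + 1 < n := by omega
      have p3 : ¬ b = n - 1 := by omega
      rw [d1, d2, if_pos p1, if_neg p3]
      by_cases h0 : 0 < b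
      · have d3 : Nat.dist a (b - 1) = e + 2 := by simp only [Nat.dist]; omega
        have p2 : ¬ b = 0 := by omega
        rw [if_pos h0, d3, if_neg p2]
        ring
      · have hb0 : b = 0 := by omega
        have hae : a = e + 1 := by omega
        rw [if_neg h0, if_pos hb0, hae]
        ring
  -- assemble
  have hMeq : ((1 + c ^ 2) / (1 - c ^ 2)) • (1 : Matrix (Fin n) (Fin n) ℝ)
      - (c / (1 - c ^ 2)) • H
      = (1 - c ^ 2)⁻¹ • ((1 + c ^ 2) • (1 : Matrix (Fin n) (Fin n) ℝ) - c • H) := by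
    rw [smul_sub, smul_smul, smul_smul]
    congr 2 <;> field_simp
  have hmul : G * (((1 + c ^ 2) / (1 - c ^ 2)) • (1 : Matrix (Fin n) (Fin n) ℝ)
      - (c / (1 - c ^ 2)) • H) = 1 := by
    rw [hMeq, Matrix.mul_smul, hGA, smul_smul, inv_mul_cancel₀ hc2, one_smul]
  exact ⟨⟨⟨G, _, hmul, mul_eq_one_comm.mp hmul⟩, rfl⟩,
    Matrix.inv_eq_right_inv hmul, hmul⟩
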